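/- Let b > 0, let β ∈ (−1,0), and let f ∈ C²[0,b] with f′(0) = 0. Then there exists K > 0 such that for every N ∈ ℕ with N ≥ 1, the modified midpoint quadrature error (with a = 0) satisfies |E_N| ≤ K/N². -/

import Mathlib

open Filter MeasureTheory Set

/-- The modified midpoint quadrature error `E_N` for `∫_a^b x^β f(x) dx`, where the singular
factor `x^β` is integrated exactly on each subinterval and `f` is evaluated at midpoints:
here `h = (b-a)/N` and `x_t = a + t·h`. -/
noncomputable def midpointError (a b β : ℝ) (f : ℝ → ℝ) (N : ℕ) : ℝ :=
  (∫ x in a..b, x ^ β * f x) -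
    ∑ n ∈ Finset.range N,
      ((a + ((n : ℝ) + 1) * ((b - a) / N)) ^ (β + 1) -
          (a + (n : ℝ) * ((b - a) / N)) ^ (β + 1)) / (β + 1) *
        f (a + ((n : ℝ) + 1 / 2) * ((b - a) / N))

open MeasureTheory Set

/-- MVT step: `(β+1)·(x+1)^β ≤ (x+1)^(β+1) − x^(β+1)` for `x ≥ 0`, `β ∈ (−1,0)`. -/
lemma mvt_step {β : ℝ} (hβ1 : -1 < β) (hβ0 : β < 0) {x : ℝ} (hx : 0 ≤ x) :
    (β + 1) * (x + 1) ^ β ≤ (x + 1) ^ (β + 1) - x ^ (β + 1) := by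
  have hb1 : (0:ℝ) < β + 1 := by linarith
  obtain ⟨c, hc, hc'⟩ := exists_hasDerivAt_eq_slope (fun t => t ^ (β+1))
      (fun t => (β+1) * t ^ β) (by linarith : x < x + 1)
      (fun t _ => (Real.continuousAt_rpow_const t (β+1) (Or.inr hb1.le)).continuousWithinAt)
      (fun t ht => by
        have htpos : 0 < t := lt_of_le_of_lt hx ht.1
        have := Real.hasDerivAt_rpow_const (p := β+1) (Or.inl htpos.ne')
        simpa using this)
  have hcpos : 0 < c := lt_of_le_of_lt hx hc.1
  have h1 : (x+1) ^ β ≤ c ^ β := Real.rpow_le_rpow_of_nonpos hcpos hc.2.le hβ0.le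
  calc (β + 1) * (x + 1) ^ β ≤ (β+1) * c ^ β := mul_le_mul_of_nonneg_left h1 hb1.le
    _ = (x + 1) ^ (β + 1) - x ^ (β + 1) := by rw [hc']; field_simp; ring

/-- `∑_{n<N} n^β ≤ N^(β+1)/(β+1)` for `β ∈ (−1,0)`. -/
lemma sum_rpow_le {β : ℝ} (hβ1 : -1 < β) (hβ0 : β < 0) (N : ℕ) :
    ∑ n ∈ Finset.range N, (n : ℝ) ^ β ≤ (N : ℝ) ^ (β + 1) / (β + 1) := by
  have hb1 : (0:ℝ) < β + 1 := by linarith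
  have aux : ∀ M : ℕ, ∑ n ∈ Finset.range (M+1), (n : ℝ) ^ β ≤ (M : ℝ) ^ (β + 1) / (β + 1) := by
    intro M
    induction M with
    | zero => simp [Real.zero_rpow (by linarith : β ≠ 0),
        Real.zero_rpow (by linarith : β + 1 ≠ 0)]
    | succ M ih =>
      rw [Finset.sum_range_succ]
      have key := mvt_step hβ1 hβ0 (x := (M:ℝ)) (Nat.cast_nonneg M)
      have h2 : ((M:ℝ) + 1) ^ β ≤ ((M:ℝ)+1) ^ (β+1) / (β+1) - (M:ℝ) ^ (β+1) / (β+1) := by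
        rw [div_sub_div_same, le_div_iff₀ hb1]
        linarith [key]
      push_cast
      linarith [ih]
  cases N with
  | zero => simp [Real.zero_rpow (by linarith : β + 1 ≠ 0)]
  | succ M =>
    have hm : (M:ℝ) ^ (β+1) ≤ ((M:ℝ)+1) ^ (β+1) :=
      Real.rpow_le_rpow (Nat.cast_nonneg M) (by linarith) hb1.le
    refine (aux M).trans ?_
    push_cast
    exact (div_le_div_iff_of_pos_right hb1).mpr hm

open MeasureTheory Set

/-- Bound `|∫ x^β g|` by `M·W` when `|g| ≤ M` pointwise. -/
lemma integral_rpow_mul_bound {β : ℝ} (hβ : -1 < β) {u v M : ℝ} (huv : u ≤ v) (hu : 0 ≤ u)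
    {g : ℝ → ℝ} (hg : IntervalIntegrable (fun x => x ^ β * g x) volume u v)
    (hM : ∀ x ∈ Icc u v, |g x| ≤ M) :
    |∫ x in u..v, x ^ β * g x| ≤ M * ((v ^ (β+1) - u ^ (β+1)) / (β+1)) := by
  have h1 : |∫ x in u..v, x ^ β * g x| ≤ ∫ x in u..v, |x ^ β * g x| :=
    intervalIntegral.abs_integral_le_integral_abs huv
  have hint2 : IntervalIntegrable (fun x => x ^ β * M) volume u v :=
    (intervalIntegral.intervalIntegrable_rpow' hβ).mul_continuousOn continuousOn_const
  have h2 : ∫ x in u..v, |x ^ β * g x| ≤ ∫ x in u..v, x ^ β * M := by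
    apply intervalIntegral.integral_mono_on huv hg.abs hint2
    intro x hx
    have hx0 : 0 ≤ x := le_trans hu hx.1
    rw [abs_mul, abs_of_nonneg (Real.rpow_nonneg hx0 β)]
    exact mul_le_mul_of_nonneg_left (hM x hx) (Real.rpow_nonneg hx0 β)
  have h3 : ∫ x in u..v, x ^ β * M = (v ^ (β+1) - u ^ (β+1)) / (β+1) * M := by
    rw [intervalIntegral.integral_mul_const, integral_rpow (Or.inl hβ)]
  rw [mul_comm M]
  calc |∫ x in u..v, x ^ β * g x| ≤ ∫ x in u..v, x ^ β * M := h1.trans h2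
    _ = _ := h3

/-- `∫_u^v (x − (u+v)/2) dx = 0`. -/
lemma integral_sub_mid (u v : ℝ) : ∫ x in u..v, (x - (u+v)/2) = 0 := by
  have hid : IntervalIntegrable (fun x : ℝ => x) volume u v :=
    (continuous_id).intervalIntegrable u v
  rw [intervalIntegral.integral_sub hid (intervalIntegrable_const (c := (u+v)/2)),
    integral_id, intervalIntegral.integral_const, smul_eq_mul]
  ring

/-- rpow Lipschitz on `[u, ∞)` pieces: `|x^β − y^β| ≤ |β| u^(β−1) |x−y|` for `x,y ∈ [u,v]`, `u>0`. -/
lemma rpow_lip {β : ℝ} (hβ0 : β < 0) {u v : ℝ} (hu : 0 < u) {x y : ℝ}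
    (hx : x ∈ Icc u v) (hy : y ∈ Icc u v) :
    |x ^ β - y ^ β| ≤ |β| * u ^ (β - 1) * |x - y| := by
  have key := Convex.norm_image_sub_le_of_norm_hasDerivWithin_le
    (f := fun t => t ^ β) (f' := fun t => β * t ^ (β - 1)) (s := Icc u v)
    (C := |β| * u ^ (β - 1))
    (fun t ht => ((Real.hasDerivAt_rpow_const (p := β)
        (Or.inl (lt_of_lt_of_le hu ht.1).ne')).hasDerivWithinAt))
    (fun t ht => by
      have ht0 : 0 < t := lt_of_lt_of_le hu ht.1
      rw [Real.norm_eq_abs, abs_mul, abs_of_nonneg (Real.rpow_nonneg ht0.le _)]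
      exact mul_le_mul_of_nonneg_left
        (Real.rpow_le_rpow_of_nonpos hu ht.1 (by linarith)) (abs_nonneg β))
    (convex_Icc u v) hy hx
  simpa [Real.norm_eq_abs] using key


set_option maxHeartbeats 2000000 in
theorem stmt5 (b β : ℝ) (hb : 0 < b) (hβ : β ∈ Set.Ioo (-1 : ℝ) 0)
    (f : ℝ → ℝ) (hf : ContDiffOn ℝ 2 f (Set.Icc 0 b))
    (hf0 : derivWithin f (Set.Icc 0 b) 0 = 0) :
    ∃ K : ℝ, 0 < K ∧ ∀ N : ℕ, 1 ≤ N →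
      |midpointError 0 b β f N| ≤ K / (N : ℝ) ^ 2 := by
  obtain ⟨hβ1, hβ0⟩ := hβ
  have hb1 : (0:ℝ) < β + 1 := by linarith
  set s : Set ℝ := Set.Icc 0 b with hs
  have ud : UniqueDiffOn ℝ s := uniqueDiffOn_Icc hb
  set f' := derivWithin f s with hf'def
  set f'' := derivWithin f' s with hf''def
  have hf1 : ContDiffOn ℝ 1 f' s := hf.derivWithin ud (by norm_num)
  have hf'cont : ContinuousOn f' s := hf1.continuousOn
  have hf''cont : ContinuousOn f'' s := hf1.continuousOn_derivWithin ud le_rfl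
  have hfcont : ContinuousOn f s := hf.continuousOn
  have hder' : ∀ x ∈ s, HasDerivWithinAt f' (f'' x) s x := fun x hx =>
    ((hf1.differentiableOn one_ne_zero) x hx).hasDerivWithinAt
  have hder : ∀ x ∈ s, HasDerivWithinAt f (f' x) s x := fun x hx =>
    ((hf.differentiableOn (by norm_num)) x hx).hasDerivWithinAt
  obtain ⟨C₀, hC₀⟩ := isCompact_Icc.exists_bound_of_continuousOn hf''cont
  set C := max C₀ 1 with hC
  have hCpos : (0:ℝ) < C := lt_of_lt_of_le one_pos (le_max_right _ _)
  have hC2 : ∀ x ∈ s, |f'' x| ≤ C := fun x hx =>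
    (le_trans (le_of_eq (Real.norm_eq_abs _).symm) (hC₀ x hx)).trans (le_max_left _ _)
  -- Lipschitz bound for f'
  have lip : ∀ x ∈ s, ∀ y ∈ s, |f' y - f' x| ≤ C * |y - x| := by
    intro x hx y hy
    have := Convex.norm_image_sub_le_of_norm_hasDerivWithin_le hder'
      (fun t ht => (le_of_eq (Real.norm_eq_abs _)).trans (hC2 t ht)) (convex_Icc 0 b) hx hy
    simpa [Real.norm_eq_abs] using this
  have h0s : (0:ℝ) ∈ s := ⟨le_refl 0, hb.le⟩
  have fp_bound : ∀ x ∈ s, |f' x| ≤ C * x := by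
    intro x hx
    have := lip 0 h0s x hx
    rw [hf0] at this
    simpa [abs_of_nonneg hx.1] using this
  -- Taylor-type bound
  have taylor : ∀ m ∈ s, ∀ x ∈ s, |f x - f m - f' m * (x - m)| ≤ C * |x - m| * |x - m| := by
    intro m hm x hx
    have hsub : uIcc m x ⊆ s := Set.uIcc_subset_Icc hm hx
    have hg : ∀ t ∈ uIcc m x, HasDerivWithinAt (fun t => f t - f' m * t)
        (f' t - f' m) (uIcc m x) t := by
      intro t ht
      have h1 := (hder t (hsub ht)).mono hsub
      have h2 : HasDerivWithinAt (fun t => f' m * t) (f' m) (uIcc m x) t := by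
        simpa using ((hasDerivAt_id t).const_mul (f' m)).hasDerivWithinAt
      exact h1.sub h2
    have hbd : ∀ t ∈ uIcc m x, ‖f' t - f' m‖ ≤ C * |x - m| := by
      intro t ht
      have hlt := lip m hm t (hsub ht)
      have e1 : max m x - min m x = |x - m| := by
        rw [max_sub_min_eq_abs, abs_sub_comm]
      have htm : |t - m| ≤ |x - m| := by
        rw [abs_sub_le_iff]
        constructor <;>
          [linarith [ht.2, min_le_left m x, e1]; linarith [ht.1, le_max_left m x, e1]]
      calc ‖f' t - f' m‖ = |f' t - f' m| := Real.norm_eq_abs _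
        _ ≤ C * |t - m| := hlt
        _ ≤ C * |x - m| := mul_le_mul_of_nonneg_left htm hCpos.le
    have key := Convex.norm_image_sub_le_of_norm_hasDerivWithin_le hg hbd
      (convex_uIcc m x) (left_mem_uIcc) (right_mem_uIcc)
    calc |f x - f m - f' m * (x - m)|
        = ‖(f x - f' m * x) - (f m - f' m * m)‖ := by rw [Real.norm_eq_abs]; ring_nf
      _ ≤ C * |x - m| * ‖x - m‖ := key
      _ = C * |x - m| * |x - m| := by rw [Real.norm_eq_abs]
  -- the constant
  refine ⟨2 * C * (1 + |β|) * b ^ (β+1) * b ^ 2 / (β + 1), by positivity, ?_⟩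
  intro N hN
  have hN0 : (0:ℝ) < N := by exact_mod_cast hN
  set h := b / N with hhdef
  have hh : 0 < h := div_pos hb hN0
  have hNh : (N:ℝ) * h = b := by rw [hhdef]; field_simp
  set xg : ℕ → ℝ := fun n => (n:ℝ) * h with hxg
  have hxg0 : xg 0 = 0 := by simp [hxg]
  have hxgN : xg N = b := by rw [hxg]; exact hNh
  have hle : ∀ n : ℕ, xg n ≤ xg (n+1) := by
    intro n; rw [hxg]; push_cast; nlinarith [hh]
  have hstep : ∀ n : ℕ, xg (n+1) - xg n = h := by
    intro n; rw [hxg]; push_cast; ring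
  have hmem : ∀ n : ℕ, n ≤ N → xg n ∈ s := by
    intro n hn
    constructor
    · positivity
    · rw [← hNh, hxg]
      exact mul_le_mul_of_nonneg_right (by exact_mod_cast hn) hh.le
  have hsubI : ∀ n : ℕ, n < N → uIcc (xg n) (xg (n+1)) ⊆ s := by
    intro n hn
    rw [Set.uIcc_of_le (hle n)]
    exact Set.Icc_subset_Icc (hmem n hn.le).1 (hmem (n+1) hn).2
  have hInt : ∀ n : ℕ, n < N → ∀ g : ℝ → ℝ, ContinuousOn g s →
      IntervalIntegrable (fun x => x ^ β * g x) volume (xg n) (xg (n+1)) :=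
    fun n hn g hg =>
      (intervalIntegral.intervalIntegrable_rpow' hβ1).mul_continuousOn (hg.mono (hsubI n hn))
  -- rewrite the error as a sum of local integrals
  have hME : midpointError 0 b β f N
      = ∑ n ∈ Finset.range N, ∫ x in xg n..xg (n+1),
          x ^ β * (f x - f (((n:ℝ) + 1/2) * h)) := by
    have e1 : ∫ x in (0:ℝ)..b, x ^ β * f x
        = ∑ n ∈ Finset.range N, ∫ x in xg n..xg (n+1), x ^ β * f x := by
      have := intervalIntegral.sum_integral_adjacent_intervals (a := xg) (n := N)
        (fun k hk => hInt k hk f hfcont)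
      rw [hxg0, hxgN] at this
      exact this.symm
    rw [midpointError, e1, ← Finset.sum_sub_distrib]
    apply Finset.sum_congr rfl
    intro n hn
    have hn' := Finset.mem_range.mp hn
    have e3 : ∫ x in xg n..xg (n+1), x ^ β
        = ((xg (n+1)) ^ (β+1) - (xg n) ^ (β+1)) / (β+1) :=
      integral_rpow (Or.inl hβ1)
    have e4 : ∫ x in xg n..xg (n+1), x ^ β * (f x - f (((n:ℝ) + 1/2) * h))
        = (∫ x in xg n..xg (n+1), x ^ β * f x)
          - (∫ x in xg n..xg (n+1), x ^ β) * f (((n:ℝ) + 1/2) * h) := by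
      rw [← intervalIntegral.integral_mul_const,
        ← intervalIntegral.integral_sub (hInt n hn' f hfcont)
          ((intervalIntegral.intervalIntegrable_rpow' hβ1).mul_continuousOn
            continuousOn_const)]
      apply intervalIntegral.integral_congr
      intro x _
      ring
    rw [e4, e3]
    have ex1 : (0:ℝ) + ((n:ℝ)+1) * ((b - 0) / ↑N) = xg (n+1) := by
      rw [sub_zero, ← hhdef, hxg]; push_cast; ring
    have ex2 : (0:ℝ) + (n:ℝ) * ((b - 0) / ↑N) = xg n := by
      rw [sub_zero, ← hhdef, hxg]; push_cast; ring
    have ex3 : (0:ℝ) + ((n:ℝ)+1/2) * ((b - 0) / ↑N) = ((n:ℝ) + 1/2) * h := by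
      rw [sub_zero, ← hhdef]; ring
    rw [ex1, ex2, ex3]
  rw [hME]
  have hW : ∀ n : ℕ, (0:ℝ) ≤ (xg (n+1) ^ (β+1) - xg n ^ (β+1)) / (β+1) := by
    intro n
    apply div_nonneg _ hb1.le
    have : xg n ^ (β+1) ≤ xg (n+1) ^ (β+1) :=
      Real.rpow_le_rpow (by rw [hxg]; positivity) (hle n) hb1.le
    linarith
  have main : ∀ n ∈ Finset.range N,
      |∫ x in xg n..xg (n+1), x ^ β * (f x - f (((n:ℝ) + 1/2) * h))|
        ≤ 2*C*h^2 * ((xg (n+1) ^ (β+1) - xg n ^ (β+1)) / (β+1))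
          + 2*C*|β| * h^(β+3) * (n:ℝ)^β := by
    intro n hn
    have hn' := Finset.mem_range.mp hn
    set m := ((n:ℝ) + 1/2) * h with hm
    have hm_mem : m ∈ Icc (xg n) (xg (n+1)) := by
      constructor
      · rw [hxg, hm]; push_cast; nlinarith [hh]
      · rw [hxg, hm]; push_cast; nlinarith [hh]
    have hm_s : m ∈ s := by
      have := hsubI n hn'
      rw [Set.uIcc_of_le (hle n)] at this
      exact this hm_mem
    have hx_s : ∀ x ∈ Icc (xg n) (xg (n+1)), x ∈ s := by
      intro x hx
      have := hsubI n hn'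
      rw [Set.uIcc_of_le (hle n)] at this
      exact this hx
    have hxm : ∀ x ∈ Icc (xg n) (xg (n+1)), |x - m| ≤ h := by
      intro x hx
      rw [abs_le]
      refine ⟨?_, ?_⟩
      · have := hstep n; have := hm_mem.2; have := hx.1; linarith
      · have := hstep n; have := hm_mem.1; have := hx.2; linarith
    rcases Nat.eq_zero_or_pos n with rfl | hn1
    · -- n = 0
      have hpt : ∀ x ∈ Icc (xg 0) (xg 1), |f x - f m| ≤ 2*C*h^2 := by
        intro x hx
        have hxs := hx_s x hx
        have hT := taylor m hm_s x hxs
        have hfp := fp_bound m hm_s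
        have hxm' := hxm x hx
        have hm_le : m ≤ h := by rw [hm]; push_cast; nlinarith [hh]
        have habs : |f' m * (x - m)| ≤ C * h * h := by
          rw [abs_mul]
          have h1 : |f' m| ≤ C * h := le_trans hfp (by nlinarith [hCpos])
          exact mul_le_mul h1 hxm' (abs_nonneg _) (by positivity)
        have hdecomp : f x - f m = (f x - f m - f' m * (x-m)) + f' m * (x-m) := by ring
        calc |f x - f m| = |(f x - f m - f' m * (x-m)) + f' m * (x-m)| := by rw [← hdecomp]
          _ ≤ |f x - f m - f' m * (x-m)| + |f' m * (x-m)| := abs_add_le _ _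
          _ ≤ C * |x-m| * |x-m| + C*h*h := add_le_add hT habs
          _ ≤ C*h*h + C*h*h := by
              have hsq : C * |x-m| * |x-m| ≤ C * h * h :=
                mul_le_mul (mul_le_mul_of_nonneg_left hxm' hCpos.le) hxm'
                  (abs_nonneg _) (by positivity)
              linarith
          _ = 2*C*h^2 := by ring
      have hbound := integral_rpow_mul_bound hβ1 (hle 0) (le_of_eq hxg0.symm)
        (hInt 0 hn' (fun x => f x - f m) (hfcont.sub continuousOn_const)) hpt
      refine hbound.trans ?_
      simp [Real.zero_rpow hβ0.ne]
    · -- n ≥ 1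
      have hnR : (1:ℝ) ≤ n := by exact_mod_cast hn1
      have hu_pos : 0 < xg n := by
        have h1 : (1:ℝ)*h ≤ (n:ℝ)*h := mul_le_mul_of_nonneg_right hnR hh.le
        simp only [hxg]
        linarith
      have int_T : IntervalIntegrable (fun x => x ^ β * (f x - f m - f' m * (x - m)))
          volume (xg n) (xg (n+1)) :=
        hInt n hn' _ ((hfcont.sub continuousOn_const).sub
          (continuousOn_const.mul (continuousOn_id.sub continuousOn_const)))
      have int_L : IntervalIntegrable (fun x => x ^ β * (x - m)) volume (xg n) (xg (n+1)) :=
        hInt n hn' _ (continuousOn_id.sub continuousOn_const)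
      have split : ∫ x in xg n..xg (n+1), x ^ β * (f x - f m)
          = (∫ x in xg n..xg (n+1), x ^ β * (f x - f m - f' m * (x - m)))
            + f' m * ∫ x in xg n..xg (n+1), x ^ β * (x - m) := by
        rw [← intervalIntegral.integral_const_mul,
          ← intervalIntegral.integral_add int_T (int_L.const_mul (f' m))]
        apply intervalIntegral.integral_congr
        intro x _
        ring
      have hpt : ∀ x ∈ Icc (xg n) (xg (n+1)), |f x - f m - f' m * (x - m)| ≤ C*h^2 := by
        intro x hx
        have hT := taylor m hm_s x (hx_s x hx)
        have hxm' := hxm x hx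
        have hsq : C * |x-m| * |x-m| ≤ C * h * h :=
          mul_le_mul (mul_le_mul_of_nonneg_left hxm' hCpos.le) hxm'
            (abs_nonneg _) (by positivity)
        have : C * h * h = C * h^2 := by ring
        linarith
      have hb1' := integral_rpow_mul_bound hβ1 (hle n) hu_pos.le int_T hpt
      have hmid : m = (xg n + xg (n+1))/2 := by rw [hm, hxg]; push_cast; ring
      have hLzero : ∫ x in xg n..xg (n+1), (x - m) = 0 := by
        rw [hmid]; exact integral_sub_mid _ _
      have hLrw : ∫ x in xg n..xg (n+1), x ^ β * (x - m)
          = ∫ x in xg n..xg (n+1), (x ^ β - m ^ β) * (x - m) := by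
        have i1 : IntervalIntegrable (fun x => m ^ β * (x - m)) volume (xg n) (xg (n+1)) :=
          (continuous_const.mul (continuous_id.sub continuous_const)).intervalIntegrable _ _
        rw [show (fun x:ℝ => (x ^ β - m ^ β) * (x - m))
            = fun x => x ^ β * (x - m) - m ^ β * (x - m) from funext fun x => by ring]
        rw [intervalIntegral.integral_sub int_L i1, intervalIntegral.integral_const_mul,
          hLzero]
        ring
      have hLbd : |∫ x in xg n..xg (n+1), x ^ β * (x - m)|
          ≤ |β| * (xg n)^(β-1) * h * h * h := by
        rw [hLrw]
        have key : ∀ x ∈ Set.uIoc (xg n) (xg (n+1)),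
            ‖(x ^ β - m ^ β) * (x - m)‖ ≤ |β| * (xg n)^(β-1) * h * h := by
          intro x hx
          have hx' : x ∈ Icc (xg n) (xg (n+1)) := by
            rw [Set.uIoc_of_le (hle n)] at hx; exact Ioc_subset_Icc_self hx
          rw [Real.norm_eq_abs, abs_mul]
          have h1 := rpow_lip hβ0 hu_pos hx' hm_mem
          have h2 := hxm x hx'
          calc |x ^ β - m ^ β| * |x - m| ≤ (|β| * (xg n)^(β-1) * |x - m|) * |x - m| :=
              mul_le_mul_of_nonneg_right h1 (abs_nonneg _)
            _ ≤ |β| * (xg n)^(β-1) * h * h := by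
                have base : (0:ℝ) ≤ |β| * (xg n)^(β-1) := by positivity
                exact mul_le_mul (mul_le_mul_of_nonneg_left h2 base) h2
                  (abs_nonneg _) (by positivity)
        have hnorm := intervalIntegral.norm_integral_le_of_norm_le_const key
        rw [Real.norm_eq_abs] at hnorm
        refine hnorm.trans (le_of_eq ?_)
        rw [hstep n, abs_of_pos hh]
      have hfpm : |f' m| ≤ C * (2*(n:ℝ)*h) := by
        refine (fp_bound m hm_s).trans ?_
        have hmle : m ≤ 2*(n:ℝ)*h := by rw [hm]; nlinarith [hh]
        exact mul_le_mul_of_nonneg_left hmle hCpos.le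
      have hlin : |f' m * ∫ x in xg n..xg (n+1), x ^ β * (x - m)|
          ≤ 2*C*|β| * h^(β+3) * (n:ℝ)^β := by
        rw [abs_mul]
        have hprod : |f' m| * |∫ x in xg n..xg (n+1), x ^ β * (x - m)|
            ≤ (C*(2*(n:ℝ)*h)) * (|β| * (xg n)^(β-1) * h*h*h) :=
          mul_le_mul hfpm hLbd (abs_nonneg _) (by positivity)
        refine hprod.trans (le_of_eq ?_)
        have hxgn : (xg n)^(β-1) = (n:ℝ)^(β-1) * h^(β-1) := by
          rw [hxg]; exact Real.mul_rpow (Nat.cast_nonneg n) hh.le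
        have en : (n:ℝ) * (n:ℝ)^(β-1) = (n:ℝ)^β := by
          have hnp : (0:ℝ) < n := by linarith
          have e := (Real.rpow_add hnp 1 (β-1)).symm
          rw [Real.rpow_one] at e
          rw [e]; norm_num
        have eh : h^(β+3) = h^(β-1) * h^4 := by
          rw [show β+3 = (β-1)+((4:ℕ):ℝ) by push_cast; ring, Real.rpow_add hh,
            Real.rpow_natCast]
        rw [hxgn, eh, ← en]
        ring
      calc |∫ x in xg n..xg (n+1), x ^ β * (f x - f m)|
          = |(∫ x in xg n..xg (n+1), x ^ β * (f x - f m - f' m * (x - m)))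
              + f' m * ∫ x in xg n..xg (n+1), x ^ β * (x - m)| := by rw [split]
        _ ≤ |∫ x in xg n..xg (n+1), x ^ β * (f x - f m - f' m * (x - m))|
              + |f' m * ∫ x in xg n..xg (n+1), x ^ β * (x - m)| := abs_add_le _ _
        _ ≤ C*h^2 * ((xg (n+1) ^ (β+1) - xg n ^ (β+1)) / (β+1))
              + 2*C*|β| * h^(β+3) * (n:ℝ)^β := add_le_add hb1' hlin
        _ ≤ 2*C*h^2 * ((xg (n+1) ^ (β+1) - xg n ^ (β+1)) / (β+1))
              + 2*C*|β| * h^(β+3) * (n:ℝ)^β := by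
            have hpos : 0 ≤ C*h^2 * ((xg (n+1) ^ (β+1) - xg n ^ (β+1)) / (β+1)) :=
              mul_nonneg (by positivity) (hW n)
            linarith
  refine (Finset.abs_sum_le_sum_abs _ _).trans ((Finset.sum_le_sum main).trans ?_)
  rw [Finset.sum_add_distrib]
  have s1 : ∑ n ∈ Finset.range N, 2*C*h^2 * ((xg (n+1) ^ (β+1) - xg n ^ (β+1)) / (β+1))
      = 2*C*h^2 * (b^(β+1) / (β+1)) := by
    rw [← Finset.mul_sum]
    congr 1
    rw [Finset.sum_congr rfl (fun n _ => sub_div (xg (n+1) ^ (β+1)) (xg n ^ (β+1)) (β+1)),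
      Finset.sum_range_sub (fun k => xg k ^ (β+1) / (β+1)), hxg0, hxgN,
      Real.zero_rpow hb1.ne', zero_div, sub_zero]
  have s2 : ∑ n ∈ Finset.range N, 2*C*|β| * h^(β+3) * (n:ℝ)^β
      ≤ 2*C*|β| * h^(β+3) * ((N:ℝ)^(β+1)/(β+1)) := by
    rw [← Finset.mul_sum]
    exact mul_le_mul_of_nonneg_left (sum_rpow_le hβ1 hβ0 N) (by positivity)
  rw [s1]
  refine (add_le_add_right s2 _).trans (le_of_eq ?_)
  have key1 : h^(β+1) * (N:ℝ)^(β+1) = b^(β+1) := by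
    rw [← Real.mul_rpow hh.le hN0.le, mul_comm h, hNh]
  have key2 : h^(β+3) = h^2 * h^(β+1) := by
    rw [show β+3 = (β+1)+((2:ℕ):ℝ) by push_cast; ring, Real.rpow_add hh, Real.rpow_natCast]
    ring
  have hh2 : h^2 = b^2/(N:ℝ)^2 := by rw [hhdef]; ring
  rw [key2, show 2*C*|β| * (h^2*h^(β+1)) * ((N:ℝ)^(β+1)/(β+1))
      = 2*C*|β| * h^2 * (b^(β+1)/(β+1)) from by rw [← key1]; ring, hh2]
  field_simp
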